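/- Define Θₙ(x) = e^{−x⁴} (dⁿ/dxⁿ)(e^{x⁴}). Then y = Θₙ satisfies the fourth-order linear ODE: y⁽⁴⁾ + 12x³ y‴ + [48x⁶ − 12(n−3)x²] y″ + [64x⁹ + (144 − 96n)x⁵ − 12(n² + 5n − 2)x] y′ + [−192n x⁸ − 48(n² + 8n)x⁴ − 4n(n² + 6n + 11)] y = 0. -/

import Mathlib

open Complex

noncomputable def fE : ℂ → ℂ := fun z => Complex.exp (z ^ 4)

lemma fE_contDiff : ContDiff ℂ ((⊤:ℕ∞):WithTop ℕ∞) fE := (contDiff_id.pow 4).cexp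

lemma fE_iter (k : ℕ) : Differentiable ℂ (iteratedDeriv k fE) := by
  rw [iteratedDeriv_eq_iterate]
  exact (fE_contDiff.iterate_deriv k).differentiable (by simp)

lemma hgF (k : ℕ) (x : ℂ) : HasDerivAt (iteratedDeriv k fE) (iteratedDeriv (k+1) fE x) x := by
  rw [iteratedDeriv_succ]
  exact ((fE_iter k) x).hasDerivAt

lemma hgF' (k m : ℕ) (h : m = k + 1) (x : ℂ) :
    HasDerivAt (iteratedDeriv k fE) (iteratedDeriv m fE x) x := h ▸ hgF k x

lemma iD_succ (k m : ℕ) (h : m = k + 1) :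
    iteratedDeriv m fE = deriv (iteratedDeriv k fE) := by subst h; exact iteratedDeriv_succ

lemma hasDerivAt_of_eq {f : ℂ → ℂ} {a b : ℂ} {x : ℂ} (h : HasDerivAt f a x) (hab : a = b) :
    HasDerivAt f b x := hab ▸ h

lemma key (p q : ℂ → ℂ) (hp : ∀ x, HasDerivAt p (q x) x) (x : ℂ) :
    HasDerivAt (fun z => Complex.exp (-z^4) * p z)
      (Complex.exp (-x^4) * (q x - 4*x^3 * p x)) x := by
  have h1 : HasDerivAt (fun z : ℂ => -z^4) (-(4*x^3)) x := by
    simpa [Pi.neg_def] using (hasDerivAt_pow 4 x).neg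
  have h3 := h1.cexp.mul (hp x)
  exact hasDerivAt_of_eq h3 (by ring)

lemma b1 : iteratedDeriv 1 fE = fun x => 4*x^3 * iteratedDeriv 0 fE x := by
  funext x
  rw [iteratedDeriv_one]
  have H : HasDerivAt fE (4*x^3 * iteratedDeriv 0 fE x) x :=
    hasDerivAt_of_eq ((hasDerivAt_pow 4 x).cexp)
      (by simp only [iteratedDeriv_zero, fE]; push_cast; ring)
  exact H.deriv

lemma b2 : iteratedDeriv 2 fE = fun x =>
    12*x^2 * iteratedDeriv 0 fE x + 4*x^3 * iteratedDeriv 1 fE x := by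
  funext x
  have H : HasDerivAt (fun x : ℂ => 4*x^3 * iteratedDeriv 0 fE x)
      (12*x^2 * iteratedDeriv 0 fE x + 4*x^3 * iteratedDeriv 1 fE x) x :=
    hasDerivAt_of_eq (((hasDerivAt_pow 3 x).const_mul (4:ℂ)).mul (hgF' 0 1 rfl x))
      (by push_cast; ring)
  calc iteratedDeriv 2 fE x = deriv (iteratedDeriv 1 fE) x := by rw [iD_succ 1 2 rfl]
    _ = deriv (fun x : ℂ => 4*x^3 * iteratedDeriv 0 fE x) x := by rw [b1]
    _ = _ := H.deriv

lemma b3 : iteratedDeriv 3 fE = fun x =>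
    24*x * iteratedDeriv 0 fE x + 24*x^2 * iteratedDeriv 1 fE x
      + 4*x^3 * iteratedDeriv 2 fE x := by
  funext x
  have H : HasDerivAt
      (fun x : ℂ => 12*x^2 * iteratedDeriv 0 fE x + 4*x^3 * iteratedDeriv 1 fE x)
      (24*x * iteratedDeriv 0 fE x + 24*x^2 * iteratedDeriv 1 fE x
        + 4*x^3 * iteratedDeriv 2 fE x) x :=
    hasDerivAt_of_eq
      ((((hasDerivAt_pow 2 x).const_mul (12:ℂ)).mul (hgF' 0 1 rfl x)).add
        (((hasDerivAt_pow 3 x).const_mul (4:ℂ)).mul (hgF' 1 2 rfl x)))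
      (by push_cast; ring)
  calc iteratedDeriv 3 fE x = deriv (iteratedDeriv 2 fE) x := by rw [iD_succ 2 3 rfl]
    _ = deriv (fun x : ℂ => 12*x^2 * iteratedDeriv 0 fE x + 4*x^3 * iteratedDeriv 1 fE x) x := by
        rw [b2]
    _ = _ := H.deriv

lemma b4 (x : ℂ) : iteratedDeriv 4 fE x =
    24 * iteratedDeriv 0 fE x + 72*x * iteratedDeriv 1 fE x
      + 36*x^2 * iteratedDeriv 2 fE x + 4*x^3 * iteratedDeriv 3 fE x := by
  have H : HasDerivAt
      (fun x : ℂ => 24*x * iteratedDeriv 0 fE x + 24*x^2 * iteratedDeriv 1 fE x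
        + 4*x^3 * iteratedDeriv 2 fE x)
      (24 * iteratedDeriv 0 fE x + 72*x * iteratedDeriv 1 fE x
        + 36*x^2 * iteratedDeriv 2 fE x + 4*x^3 * iteratedDeriv 3 fE x) x :=
    hasDerivAt_of_eq
      (((((hasDerivAt_id' x).const_mul (24:ℂ)).mul (hgF' 0 1 rfl x)).add
        (((hasDerivAt_pow 2 x).const_mul (24:ℂ)).mul (hgF' 1 2 rfl x))).add
        (((hasDerivAt_pow 3 x).const_mul (4:ℂ)).mul (hgF' 2 3 rfl x)))
      (by push_cast; ring)
  calc iteratedDeriv 4 fE x = deriv (iteratedDeriv 3 fE) x := by rw [iD_succ 3 4 rfl]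
    _ = deriv (fun x : ℂ => 24*x * iteratedDeriv 0 fE x + 24*x^2 * iteratedDeriv 1 fE x
          + 4*x^3 * iteratedDeriv 2 fE x) x := by rw [b3]
    _ = _ := H.deriv

lemma rec4 (m : ℕ) : ∀ x : ℂ, iteratedDeriv (m+4) fE x =
    4*x^3 * iteratedDeriv (m+3) fE x
    + 12*((m:ℂ)+3)*x^2 * iteratedDeriv (m+2) fE x
    + 12*((m:ℂ)+3)*((m:ℂ)+2)*x * iteratedDeriv (m+1) fE x
    + 4*((m:ℂ)+3)*((m:ℂ)+2)*((m:ℂ)+1) * iteratedDeriv m fE x := by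
  induction m with
  | zero =>
    intro x
    simp only [Nat.zero_add]
    rw [b4 x]
    push_cast
    ring
  | succ m ih =>
    intro x
    have hfun : iteratedDeriv (m+4) fE = fun y =>
        4*y^3 * iteratedDeriv (m+3) fE y
        + 12*((m:ℂ)+3)*y^2 * iteratedDeriv (m+2) fE y
        + 12*((m:ℂ)+3)*((m:ℂ)+2)*y * iteratedDeriv (m+1) fE y
        + 4*((m:ℂ)+3)*((m:ℂ)+2)*((m:ℂ)+1) * iteratedDeriv m fE y := funext ih
    have H : HasDerivAt (fun y : ℂ =>
        4*y^3 * iteratedDeriv (m+3) fE y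
        + 12*((m:ℂ)+3)*y^2 * iteratedDeriv (m+2) fE y
        + 12*((m:ℂ)+3)*((m:ℂ)+2)*y * iteratedDeriv (m+1) fE y
        + 4*((m:ℂ)+3)*((m:ℂ)+2)*((m:ℂ)+1) * iteratedDeriv m fE y)
        (12*x^2 * iteratedDeriv (m+3) fE x + 4*x^3 * iteratedDeriv (m+4) fE x
          + (24*((m:ℂ)+3)*x * iteratedDeriv (m+2) fE x
              + 12*((m:ℂ)+3)*x^2 * iteratedDeriv (m+3) fE x)
          + (12*((m:ℂ)+3)*((m:ℂ)+2) * iteratedDeriv (m+1) fE x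
              + 12*((m:ℂ)+3)*((m:ℂ)+2)*x * iteratedDeriv (m+2) fE x)
          + 4*((m:ℂ)+3)*((m:ℂ)+2)*((m:ℂ)+1) * iteratedDeriv (m+1) fE x) x :=
      hasDerivAt_of_eq
        ((((((hasDerivAt_pow 3 x).const_mul (4:ℂ)).mul (hgF' (m+3) (m+4) rfl x)).add
          (((hasDerivAt_pow 2 x).const_mul (12*((m:ℂ)+3))).mul (hgF' (m+2) (m+3) rfl x))).add
          ((((hasDerivAt_id' x).const_mul (12*((m:ℂ)+3)*((m:ℂ)+2))).mul (hgF' (m+1) (m+2) rfl x)))).add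
          ((hgF' m (m+1) rfl x).const_mul (4*((m:ℂ)+3)*((m:ℂ)+2)*((m:ℂ)+1))))
        (by push_cast; ring)
    calc iteratedDeriv (m+1+4) fE x = deriv (iteratedDeriv (m+4) fE) x := by
          rw [iD_succ (m+4) (m+1+4) (by omega)]
      _ = _ := by
          rw [hfun, H.deriv]
          push_cast
          linear_combination (4*x^3 : ℂ) * ih x
theorem fourth_order_ode_example
    (Θ : ℕ → ℂ → ℂ)
    (hΘ : ∀ n x, Θ n x = Complex.exp (-x ^ 4) *
      iteratedDeriv n (fun z => Complex.exp (z ^ 4)) x)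
    (n : ℕ) (x : ℂ) :
    iteratedDeriv 4 (Θ n) x + 12 * x ^ 3 * iteratedDeriv 3 (Θ n) x
      + (48 * x ^ 6 - 12 * ((n : ℂ) - 3) * x ^ 2) * iteratedDeriv 2 (Θ n) x
      + (64 * x ^ 9 + (144 - 96 * (n : ℂ)) * x ^ 5
          - 12 * ((n : ℂ) ^ 2 + 5 * (n : ℂ) - 2) * x) * deriv (Θ n) x
      + (-192 * (n : ℂ) * x ^ 8 - 48 * ((n : ℂ) ^ 2 + 8 * (n : ℂ)) * x ^ 4
          - 4 * (n : ℂ) * ((n : ℂ) ^ 2 + 6 * (n : ℂ) + 11)) * Θ n x = 0 := by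
  have hΘf : Θ n = fun y => Complex.exp (-y^4) * iteratedDeriv n fE y :=
    funext fun y => hΘ n y
  -- level 1
  have hA0 : ∀ y : ℂ, HasDerivAt (iteratedDeriv n fE) (iteratedDeriv (n+1) fE y) y :=
    fun y => hgF n y
  have hd1 : deriv (Θ n) = fun y => Complex.exp (-y^4) *
      (iteratedDeriv (n+1) fE y - 4*y^3 * iteratedDeriv n fE y) := by
    funext y
    rw [hΘf]
    exact (key _ _ hA0 y).deriv
  -- level 2
  have hA1 : ∀ y : ℂ, HasDerivAt
      (fun z => iteratedDeriv (n+1) fE z - 4*z^3 * iteratedDeriv n fE z)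
      (iteratedDeriv (n+2) fE y - 12*y^2 * iteratedDeriv n fE y
        - 4*y^3 * iteratedDeriv (n+1) fE y) y := fun y =>
    hasDerivAt_of_eq
      ((hgF' (n+1) (n+2) rfl y).sub
        (((hasDerivAt_pow 3 y).const_mul (4:ℂ)).mul (hgF n y)))
      (by push_cast; ring)
  have hd2 : iteratedDeriv 2 (Θ n) = fun y => Complex.exp (-y^4) *
      (iteratedDeriv (n+2) fE y - 8*y^3 * iteratedDeriv (n+1) fE y
        + (16*y^6 - 12*y^2) * iteratedDeriv n fE y) := by
    funext y
    calc iteratedDeriv 2 (Θ n) y = deriv (iteratedDeriv 1 (Θ n)) y := by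
          rw [show iteratedDeriv 2 (Θ n) = deriv (iteratedDeriv 1 (Θ n)) from iteratedDeriv_succ]
      _ = deriv (fun z => Complex.exp (-z^4) *
            (iteratedDeriv (n+1) fE z - 4*z^3 * iteratedDeriv n fE z)) y := by
          rw [iteratedDeriv_one, hd1]
      _ = _ := by rw [(key _ _ hA1 y).deriv]; ring
  -- level 3
  have hA2 : ∀ y : ℂ, HasDerivAt
      (fun z => iteratedDeriv (n+2) fE z - 8*z^3 * iteratedDeriv (n+1) fE z
        + (16*z^6 - 12*z^2) * iteratedDeriv n fE z)
      (iteratedDeriv (n+3) fE y - 24*y^2 * iteratedDeriv (n+1) fE y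
        - 8*y^3 * iteratedDeriv (n+2) fE y
        + ((96*y^5 - 24*y) * iteratedDeriv n fE y
            + (16*y^6 - 12*y^2) * iteratedDeriv (n+1) fE y)) y := fun y =>
    hasDerivAt_of_eq
      (((hgF' (n+2) (n+3) rfl y).sub
          (((hasDerivAt_pow 3 y).const_mul (8:ℂ)).mul (hgF' (n+1) (n+2) rfl y))).add
        ((((hasDerivAt_pow 6 y).const_mul (16:ℂ)).sub
            ((hasDerivAt_pow 2 y).const_mul (12:ℂ))).mul (hgF n y)))
      (by simp only [Pi.sub_apply]; push_cast; ring)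
  have hd3 : iteratedDeriv 3 (Θ n) = fun y => Complex.exp (-y^4) *
      (iteratedDeriv (n+3) fE y - 12*y^3 * iteratedDeriv (n+2) fE y
        + (48*y^6 - 36*y^2) * iteratedDeriv (n+1) fE y
        + (144*y^5 - 64*y^9 - 24*y) * iteratedDeriv n fE y) := by
    funext y
    calc iteratedDeriv 3 (Θ n) y = deriv (iteratedDeriv 2 (Θ n)) y := by
          rw [show iteratedDeriv 3 (Θ n) = deriv (iteratedDeriv 2 (Θ n)) from iteratedDeriv_succ]
      _ = deriv (fun z => Complex.exp (-z^4) *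
            (iteratedDeriv (n+2) fE z - 8*z^3 * iteratedDeriv (n+1) fE z
              + (16*z^6 - 12*z^2) * iteratedDeriv n fE z)) y := by rw [hd2]
      _ = _ := by rw [(key _ _ hA2 y).deriv]; ring
  -- level 4
  have hA3 : ∀ y : ℂ, HasDerivAt
      (fun z => iteratedDeriv (n+3) fE z - 12*z^3 * iteratedDeriv (n+2) fE z
        + (48*z^6 - 36*z^2) * iteratedDeriv (n+1) fE z
        + (144*z^5 - 64*z^9 - 24*z) * iteratedDeriv n fE z)
      (iteratedDeriv (n+4) fE y - 36*y^2 * iteratedDeriv (n+2) fE y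
        - 12*y^3 * iteratedDeriv (n+3) fE y
        + ((288*y^5 - 72*y) * iteratedDeriv (n+1) fE y
            + (48*y^6 - 36*y^2) * iteratedDeriv (n+2) fE y)
        + ((720*y^4 - 576*y^8 - 24) * iteratedDeriv n fE y
            + (144*y^5 - 64*y^9 - 24*y) * iteratedDeriv (n+1) fE y)) y := fun y =>
    hasDerivAt_of_eq
      ((((hgF' (n+3) (n+4) rfl y).sub
          (((hasDerivAt_pow 3 y).const_mul (12:ℂ)).mul (hgF' (n+2) (n+3) rfl y))).add
        ((((hasDerivAt_pow 6 y).const_mul (48:ℂ)).sub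
            ((hasDerivAt_pow 2 y).const_mul (36:ℂ))).mul (hgF' (n+1) (n+2) rfl y))).add
        (((((hasDerivAt_pow 5 y).const_mul (144:ℂ)).sub
            ((hasDerivAt_pow 9 y).const_mul (64:ℂ))).sub
            ((hasDerivAt_id' y).const_mul (24:ℂ))).mul (hgF n y)))
      (by simp only [Pi.sub_apply]; push_cast; ring)
  have hd4 : iteratedDeriv 4 (Θ n) x = Complex.exp (-x^4) *
      ((iteratedDeriv (n+4) fE x - 36*x^2 * iteratedDeriv (n+2) fE x
        - 12*x^3 * iteratedDeriv (n+3) fE x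
        + ((288*x^5 - 72*x) * iteratedDeriv (n+1) fE x
            + (48*x^6 - 36*x^2) * iteratedDeriv (n+2) fE x)
        + ((720*x^4 - 576*x^8 - 24) * iteratedDeriv n fE x
            + (144*x^5 - 64*x^9 - 24*x) * iteratedDeriv (n+1) fE x))
        - 4*x^3 * (iteratedDeriv (n+3) fE x - 12*x^3 * iteratedDeriv (n+2) fE x
        + (48*x^6 - 36*x^2) * iteratedDeriv (n+1) fE x
        + (144*x^5 - 64*x^9 - 24*x) * iteratedDeriv n fE x)) := by
    calc iteratedDeriv 4 (Θ n) x = deriv (iteratedDeriv 3 (Θ n)) x := by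
          rw [show iteratedDeriv 4 (Θ n) = deriv (iteratedDeriv 3 (Θ n)) from iteratedDeriv_succ]
      _ = deriv (fun z => Complex.exp (-z^4) *
            (iteratedDeriv (n+3) fE z - 12*z^3 * iteratedDeriv (n+2) fE z
              + (48*z^6 - 36*z^2) * iteratedDeriv (n+1) fE z
              + (144*z^5 - 64*z^9 - 24*z) * iteratedDeriv n fE z)) x := by rw [hd3]
      _ = _ := (key _ _ hA3 x).deriv
  rw [hd4, hd3, hd2, hd1, hΘ n x,
    show iteratedDeriv n (fun z => Complex.exp (z ^ 4)) x = iteratedDeriv n fE x from rfl,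
    show (-x^4 : ℂ) = -x^4 from rfl]
  push_cast
  linear_combination Complex.exp (-x^4) * rec4 n x
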